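/- Define a sequence of functions g_m : ℝ → ℝ recursively by g_0(T) = 1/T and g_{m+1}(T) = −(d/dT)[ g_m(T) / (1 − T⁻²) ]. Then for every integer m ≥ 0 and every real T with T ∉ {0, 1, −1}: g_m(T) = (m!/(T − T⁻¹)^{2m}) · Σ_{l=0}^{m} C(m,l)² · T^{2l−m−1}. -/

import Mathlib

open Finset

/-- The sequence `g_m : ℝ → ℝ` defined by `g_0(T) = 1/T` and
`g_{m+1}(T) = -(d/dT)[ g_m(T) / (1 - T⁻²) ]`. -/
noncomputable def g : ℕ → ℝ → ℝ
  | 0 => fun T => 1 / T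
  | m + 1 => fun T => -deriv (fun s => g m s / (1 - s⁻¹ ^ 2)) T

/-- numerator polynomial -/
noncomputable def Nf (m : ℕ) (s : ℝ) : ℝ :=
  ∑ l ∈ Finset.range (m + 1), ((m.choose l : ℝ)) ^ 2 * s ^ (2 * l + m + 1)

/-- its derivative -/
noncomputable def Nd (m : ℕ) (s : ℝ) : ℝ :=
  ∑ l ∈ Finset.range (m + 1), ((m.choose l : ℝ)) ^ 2 * ((2 * l + m + 1 : ℕ) : ℝ) * s ^ (2 * l + m)

lemma hasDerivAt_Nf (m : ℕ) (s : ℝ) : HasDerivAt (Nf m) (Nd m s) s := by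
  unfold Nf Nd
  apply HasDerivAt.fun_sum
  intro l _
  have h := (hasDerivAt_pow (2 * l + m + 1) s).const_mul (((m.choose l : ℝ)) ^ 2)
  convert h using 1
  · rfl
  simp [Nat.add_sub_cancel]
  ring

lemma coeff_id (m l : ℕ) (hl : l ≤ m) :
    ((m.choose l : ℝ))^2 * ((4*m+2 : ℝ) - (2*l+m+1)) + ((m.choose (l+1) : ℝ))^2 * ((2*(l+1)+m+1 : ℕ) : ℝ)
      = ((m:ℝ)+1) * (((m.choose l : ℝ)) + (m.choose (l+1) : ℝ))^2 := by
  have h : ((m.choose (l+1) : ℝ)) * ((l:ℝ)+1) = ((m.choose l : ℝ)) * ((m:ℝ) - l) := by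
    have := Nat.choose_succ_right_eq m l
    have h2 : ((m.choose (l+1) * (l+1) : ℕ) : ℝ) = ((m.choose l * (m - l) : ℕ) : ℝ) := by
      exact_mod_cast congrArg (Nat.cast (R := ℝ)) this
    push_cast [Nat.cast_sub hl] at h2
    linarith [h2]
  push_cast
  linear_combination (2 * (m.choose (l+1) : ℝ) - 2 * (m.choose l : ℝ)) * h

lemma Pkey (m : ℕ) (T : ℝ) :
    T^2 * (((4*m+2 : ℝ)) * T * Nf m T - (T^2 - 1) * Nd m T) = ((m:ℝ)+1) * Nf (m+1) T := by
  unfold Nf Nd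
  rw [Finset.mul_sum, Finset.mul_sum, ← Finset.sum_sub_distrib, Finset.mul_sum, Finset.mul_sum]
  -- LHS = ∑_{l<m+1} (A l + B l)
  have lhs_eq : ∀ l ∈ Finset.range (m+1),
      T^2 * ((4*(m:ℝ)+2) * T * (((m.choose l : ℝ))^2 * T ^ (2*l+m+1))
        - (T^2-1) * (((m.choose l : ℝ))^2 * ((2*l+m+1 : ℕ):ℝ) * T ^ (2*l+m)))
      = (((m.choose l : ℝ))^2 * ((4*m+2 : ℝ) - (2*l+m+1)) * T ^ (2*l+m+4)
          + ((m.choose l : ℝ))^2 * ((2*l+m+1 : ℕ):ℝ) * T ^ (2*l+m+2)) := by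
    intro l _
    push_cast
    ring
  rw [Finset.sum_congr rfl lhs_eq, Finset.sum_add_distrib]
  -- split second LHS sum: first term out
  rw [Finset.sum_range_succ' (fun l => ((m.choose l : ℝ))^2 * ((2*l+m+1 : ℕ):ℝ) * T ^ (2*l+m+2)) m]
  -- extend range m sum to range (m+1): top term is zero
  have hext : (∑ l ∈ Finset.range m, ((m.choose (l+1) : ℝ))^2 * ((2*(l+1)+m+1 : ℕ):ℝ) * T ^ (2*(l+1)+m+2))
      = ∑ l ∈ Finset.range (m+1), ((m.choose (l+1) : ℝ))^2 * ((2*(l+1)+m+1 : ℕ):ℝ) * T ^ (2*(l+1)+m+2) := by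
    rw [Finset.sum_range_succ]
    simp [Nat.choose_succ_self]
  rw [hext]
  -- RHS: split off l = 0
  rw [Finset.sum_range_succ' (fun l => ((m:ℝ)+1) * (((m+1).choose l : ℝ)^2 * T ^ (2*l+(m+1)+1))) (m+1)]
  rw [← add_assoc, ← Finset.sum_add_distrib]
  have rhs_eq : ∀ l ∈ Finset.range (m+1),
      ((m.choose l : ℝ))^2 * ((4*m+2 : ℝ) - (2*l+m+1)) * T ^ (2*l+m+4)
        + ((m.choose (l+1) : ℝ))^2 * ((2*(l+1)+m+1 : ℕ):ℝ) * T ^ (2*(l+1)+m+2)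
      = (((m:ℝ)+1) * (((m+1).choose (l+1) : ℝ)^2 * T ^ (2*(l+1)+(m+1)+1))) := by
    intro l hl
    rw [Nat.choose_succ_succ]
    have := coeff_id m l (Nat.lt_succ_iff.mp (Finset.mem_range.mp hl))
    push_cast at this ⊢
    linear_combination T ^ (2*l+m+4) * this
  rw [Finset.sum_congr rfl rhs_eq]
  simp [Nat.choose_zero_right]

lemma key (m : ℕ) (T : ℝ) (hT0 : T ≠ 0) (hu : T^2 - 1 ≠ 0) :
    g m T = (m.factorial : ℝ) * Nf m T / (T^2 * (T^2 - 1)^(2*m)) := by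
  induction m generalizing T with
  | zero =>
    show 1 / T = _
    unfold Nf
    simp
    field_simp
  | succ m ih =>
    show -deriv (fun s => g m s / (1 - s⁻¹ ^ 2)) T = _
    have hev : (fun s => g m s / (1 - s⁻¹ ^ 2)) =ᶠ[nhds T]
        (fun s => (m.factorial : ℝ) * Nf m s / (s^2 - 1)^(2*m+1)) := by
      have h1 : ∀ᶠ s in nhds T, s ≠ 0 := eventually_ne_nhds hT0
      have h2 : ∀ᶠ s in nhds T, s^2 - 1 ≠ 0 :=
        (by fun_prop : ContinuousAt (fun s : ℝ => s^2 - 1) T).eventually_ne hu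
      filter_upwards [h1, h2] with s hs0 hsu
      rw [ih s hs0 hsu]
      have h3 : (1 : ℝ) - s⁻¹ ^ 2 = (s^2 - 1) / s^2 := by field_simp
      rw [h3]
      field_simp
      ring
    rw [hev.deriv_eq]
    have hD : HasDerivAt (fun s : ℝ => (s^2 - 1)^(2*m+1))
        (((2*m+1 : ℕ) : ℝ) * (T^2-1)^(2*m) * (2*T)) T := by
      have hb : HasDerivAt (fun s : ℝ => s^2 - 1) (2*T) T := by
        simpa using (hasDerivAt_pow 2 T).sub_const 1
      have := hb.fun_pow (2*m+1)
      simpa [Nat.add_sub_cancel] using this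
    have hN : HasDerivAt (fun s => (m.factorial : ℝ) * Nf m s) ((m.factorial : ℝ) * Nd m T) T :=
      (hasDerivAt_Nf m T).const_mul _
    have hpow : (T^2 - 1)^(2*m+1) ≠ 0 := pow_ne_zero _ hu
    have hdiv := hN.fun_div hD hpow
    rw [hdiv.deriv]
    have hP := Pkey m T
    rw [Nat.factorial_succ]
    push_cast
    field_simp
    push_cast at hP
    linear_combination (T^2-1)^(4*m+2) * hP


/-- For every `m ≥ 0` and real `T ∉ {0, 1, -1}`:
`g m T = (m!/(T - T⁻¹)^(2m)) · ∑_{l=0}^{m} C(m,l)² T^(2l-m-1)`. -/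
theorem stmt3 (m : ℕ) (T : ℝ) (hT0 : T ≠ 0) (hT1 : T ≠ 1) (hT1' : T ≠ -1) :
    g m T =
      (m.factorial : ℝ) / (T - T⁻¹) ^ (2 * m) *
        ∑ l ∈ Finset.range (m + 1),
          ((m.choose l : ℝ)) ^ 2 * T ^ ((2 * l : ℤ) - m - 1) := by
  have hu : T^2 - 1 ≠ 0 := by
    have h1 : T - 1 ≠ 0 := sub_ne_zero.2 hT1
    have h2 : T + 1 ≠ 0 := by intro h; apply hT1'; linarith
    have : (T - 1) * (T + 1) ≠ 0 := mul_ne_zero h1 h2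
    intro h; apply this; linear_combination h
  rw [key m T hT0 hu]
  have hz : ∀ l ∈ Finset.range (m+1),
      ((m.choose l : ℝ)) ^ 2 * T ^ ((2 * l : ℤ) - m - 1)
        = ((m.choose l : ℝ)) ^ 2 * T ^ (2*l+m+1) * (T ^ (2*m+2))⁻¹ := by
    intro l _
    have he : ((2 * l : ℤ) - m - 1) = ((2*l+m+1 : ℕ) : ℤ) - ((2*m+2 : ℕ) : ℤ) := by
      push_cast; ring
    rw [he, zpow_sub₀ hT0, zpow_natCast, zpow_natCast, div_eq_mul_inv, mul_assoc]
  rw [Finset.sum_congr rfl hz, ← Finset.sum_mul]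
  have hTT : T - T⁻¹ = (T^2 - 1) / T := by field_simp
  rw [hTT]
  unfold Nf
  rw [div_pow]
  field_simp
  ring
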